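/- Let W = {too-high, too-low} and let T be a type. Let F and M_T be the functors from the product category (Type u) × (Type u) to Type u given on objects by F(R, X) = ℕ × R × (W → X) and M_T(R, X) = T → (R ⊕ X × T) (with the evident action on morphisms). Then the map sending a natural transformation α : F ⟶ M_T to the function δ : T × ℕ → Unit ⊕ (W × T) defined by δ(t, n) = α.app (Unit, W) (n, (), id_W) t is a bijection between natural transformations F ⟶ M_T and functions T × ℕ → Unit ⊕ (W × T). -/

import Mathlib

open CategoryTheory

/-- The two possible wrong-guess answers of the teacher. -/
inductive W : Type
  | tooHigh : W
  | tooLow : W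
  deriving DecidableEq

/-- The game type of the natural number guessing game:
`F (R, X) = ℕ × R × (W → X)`. -/
def FGame : Type × Type ⥤ Type where
  obj P := ℕ × P.1 × (W → P.2)
  map f := TypeCat.ofHom fun x => (x.1, f.1 x.2.1, fun w => f.2 (x.2.2 w))

/-- The teacher functor `M_T (R, X) = T → (R ⊕ X × T)`. -/
def MGame (T : Type) : Type × Type ⥤ Type where
  obj P := T → (P.1 ⊕ P.2 × T)
  map f := TypeCat.ofHom fun g t => Sum.map f.1 (Prod.map f.2 id) (g t)
  map_id := by
    intro P
    ext g t
    dsimp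
    cases g t <;> rfl
  map_comp := by
    intro P Q S f g
    ext h t
    dsimp
    cases h t <;> rfl

/-- Inverse construction: from `δ` build a natural transformation. -/
def ofDelta (T : Type) (δ : T × ℕ → Unit ⊕ W × T) : FGame ⟶ MGame T where
  app P := TypeCat.ofHom fun (x : ℕ × P.1 × (W → P.2)) t =>
    Sum.map (fun _ => x.2.1) (Prod.map x.2.2 id) (δ (t, x.1))
  naturality := by
    intro P Q f
    ext x
    funext t
    show Sum.map _ _ (δ (t, x.1)) = Sum.map _ _ (Sum.map _ _ (δ (t, x.1)))
    cases δ (t, x.1) <;> rfl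

lemma key (T : Type) (α : FGame ⟶ MGame T) (P : Type × Type)
    (x : ℕ × P.1 × (W → P.2)) (t : T) :
    α.app P x t =
      Sum.map (fun _ => x.2.1) (Prod.map x.2.2 id)
        (α.app (Unit, W) (x.1, (), id) t) := by
  obtain ⟨n, r, f⟩ := x
  have h := α.naturality (X := ((Unit, W) : Type × Type)) (Y := P)
    ((TypeCat.ofHom (fun _ => r), TypeCat.ofHom f) : ((Unit, W) : Type × Type) ⟶ P)
  have h2 := ConcreteCategory.congr_hom h ((n, (), id) : FGame.obj (Unit, W))
  have h3 := congrFun h2 t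
  simp [FGame, MGame] at h3
  exact h3

/-- Teachers in the generic sense (natural transformations `F ⟶ M_T`)
correspond bijectively to maps `δ : T × ℕ → Unit ⊕ (W × T)`,
via `δ (t, n) = α.app (Unit, W) (n, (), id) t`. -/
theorem nat_teacher_characterization (T : Type) :
    Function.Bijective
      (fun α : FGame ⟶ MGame T =>
        (fun p : T × ℕ => α.app (Unit, W) (p.2, (), id) p.1 :
          T × ℕ → Unit ⊕ W × T)) := by
  apply Function.bijective_iff_has_inverse.mpr
  refine ⟨fun δ => ofDelta T δ, ?_, ?_⟩
  · intro α
    apply NatTrans.ext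
    funext P
    ext x
    funext t
    dsimp [ofDelta]
    rw [key T α P x t]
    rfl
  · intro δ
    funext p
    show Sum.map _ _ (δ (p.1, p.2)) = δ p
    cases δ p <;> rfl
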